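/- A ℤ²-colored graph (G,γ) is a Ross graph if and only if, for any vertex u of G, the ℤ²-colored graph obtained from (G,γ) by adding three self-loops at u colored (1,0), (0,1) and (1,1) is a colored-Laman graph. -/

import Mathlib

open Matrix

noncomputable section

/-- A `Γ`-colored directed multigraph: vertex set `Fin n`, edge set `Fin m`,
each edge `e` directed from `tail e` to `head e` with color `color e`. -/
structure CGraph (Γ : Type) where
  n : ℕ
  m : ℕ
  tail : Fin m → Fin n
  head : Fin m → Fin n
  color : Fin m → Γ

namespace CGraph

variable {Γ : Type} [AddCommGroup Γ]

/-- The vertices spanned by a subset `S` of edges (the subgraph determined by `S`). -/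
def verts (G : CGraph Γ) (S : Finset (Fin G.m)) : Finset (Fin G.n) :=
  S.image G.tail ∪ S.image G.head

/-- One step of a walk in the subgraph `S`, recorded together with the running gain:
an edge may be traversed forwards (adding its color) or backwards (subtracting it). -/
def liftStep (G : CGraph Γ) (S : Finset (Fin G.m)) (x y : Fin G.n × Γ) : Prop :=
  ∃ e ∈ S,
    (G.tail e = x.1 ∧ G.head e = y.1 ∧ y.2 = x.2 + G.color e) ∨
    (G.head e = x.1 ∧ G.tail e = y.1 ∧ y.2 = x.2 - G.color e)

/-- The ρ-image of the component of `v` in the subgraph `S`: the subgroup of `Γ`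
formed by the gains of closed walks in `S` based at `v`. -/
def gainGroup (G : CGraph Γ) (S : Finset (Fin G.m)) (v : Fin G.n) : AddSubgroup Γ :=
  AddSubgroup.closure {g : Γ | Relation.ReflTransGen (G.liftStep S) (v, 0) (v, g)}

/-- Adjacency (through an edge of `S`) on the vertices of the subgraph `S`. -/
def adj (G : CGraph Γ) (S : Finset (Fin G.m))
    (x y : {v : Fin G.n // v ∈ G.verts S}) : Prop :=
  ∃ e ∈ S, (G.tail e = x.1 ∧ G.head e = y.1) ∨ (G.tail e = y.1 ∧ G.head e = x.1)

/-- The connected components of the subgraph `S`. -/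
def comps (G : CGraph Γ) (S : Finset (Fin G.m)) : Type :=
  Quot (G.adj S)

/-- The component `x` of the subgraph `S` has trivial ρ-image. -/
def TrivComp (G : CGraph Γ) (S : Finset (Fin G.m)) (x : G.comps S) : Prop :=
  ∃ v, Quot.mk (G.adj S) v = x ∧ G.gainGroup S v.1 = ⊥

/-- The number of connected components of `S` with trivial ρ-image. -/
def c0 (G : CGraph Γ) (S : Finset (Fin G.m)) : ℕ :=
  Nat.card {x : G.comps S // G.TrivComp S x}

/-- The number of connected components of `S` with nontrivial ρ-image. -/
def c1 (G : CGraph Γ) (S : Finset (Fin G.m)) : ℕ :=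
  Nat.card {x : G.comps S // ¬ G.TrivComp S x}

/-- The total number of connected components of the subgraph `S`. -/
def numComps (G : CGraph Γ) (S : Finset (Fin G.m)) : ℕ :=
  Nat.card (G.comps S)

/-- `Λ(S)`: the subgroup of `Γ` generated by the ρ-images of all components of `S`. -/
def Lambda (G : CGraph Γ) (S : Finset (Fin G.m)) : AddSubgroup Γ :=
  ⨆ v ∈ G.verts S, G.gainGroup S v

end CGraph

/-- The rank of a subgroup of `ℤ²`. -/
def zrank (H : AddSubgroup (ℤ × ℤ)) : ℕ :=
  Module.finrank ℤ (AddSubgroup.toIntSubmodule H)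

namespace CGraph

/-- Colored-Laman sparsity for `ℤ²`-colored graphs. -/
def ColoredLamanSparse (G : CGraph (ℤ × ℤ)) : Prop :=
  ∀ S : Finset (Fin G.m), S.Nonempty →
    (S.card : ℤ) ≤ 2 * (G.verts S).card
      + max (2 * (zrank (G.Lambda S) : ℤ) - 1) 0
      - 3 * (G.c0 S : ℤ) - 2 * (G.c1 S : ℤ)

/-- A colored-Laman graph: colored-Laman sparse with `m = 2n + 1` edges. -/
def ColoredLaman (G : CGraph (ℤ × ℤ)) : Prop :=
  G.ColoredLamanSparse ∧ (G.m : ℤ) = 2 * (G.n : ℤ) + 1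

end CGraph

namespace CGraph

/-- A Ross graph: `m = 2n - 2` edges and every subgraph satisfies
`m' ≤ 2n' - 3c'₀ - 2c'₁`. -/
def Ross (G : CGraph (ℤ × ℤ)) : Prop :=
  (G.m : ℤ) = 2 * (G.n : ℤ) - 2 ∧
  ∀ S : Finset (Fin G.m), S.Nonempty →
    (S.card : ℤ) ≤ 2 * (G.verts S).card - 3 * (G.c0 S : ℤ) - 2 * (G.c1 S : ℤ)

end CGraph

namespace CGraph

/-- The graph obtained from `G` by adding three self-loops at the vertex `u`,
colored `(1,0)`, `(0,1)` and `(1,1)`. -/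
def addThreeLoops (G : CGraph (ℤ × ℤ)) (u : Fin G.n) : CGraph (ℤ × ℤ) where
  n := G.n
  m := G.m + 3
  tail := fun e => if h : (e : ℕ) < G.m then G.tail ⟨e, h⟩ else u
  head := fun e => if h : (e : ℕ) < G.m then G.head ⟨e, h⟩ else u
  color := fun e =>
    if h : (e : ℕ) < G.m then G.color ⟨e, h⟩
    else if (e : ℕ) = G.m then (1, 0)
    else if (e : ℕ) = G.m + 1 then (0, 1)
    else (1, 1)

end CGraph

/-! ### Auxiliary machinery -/

section Aux

open Relation

section Helpers

open Relation

/-- Transfer a `Quot` across an equivalence when the relations generate each other. -/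
def quotCongr {α β : Type*} (f : α ≃ β) {r : α → α → Prop} {s : β → β → Prop}
    (hrs : ∀ a b, r a b → Relation.EqvGen s (f a) (f b))
    (hsr : ∀ a b, s a b → Relation.EqvGen r (f.symm a) (f.symm b)) : Quot r ≃ Quot s where
  toFun := Quot.lift (fun a => Quot.mk s (f a)) (fun a b h => Quot.eqvGen_sound (hrs a b h))
  invFun := Quot.lift (fun b => Quot.mk r (f.symm b)) (fun a b h => Quot.eqvGen_sound (hsr a b h))
  left_inv := by
    intro q
    induction q using Quot.ind with
    | _ a => simp
  right_inv := by
    intro q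
    induction q using Quot.ind with
    | _ b => simp

@[simp] lemma quotCongr_mk {α β : Type*} (f : α ≃ β) {r : α → α → Prop} {s : β → β → Prop}
    (hrs : ∀ a b, r a b → Relation.EqvGen s (f a) (f b))
    (hsr : ∀ a b, s a b → Relation.EqvGen r (f.symm a) (f.symm b)) (a : α) :
    quotCongr f hrs hsr (Quot.mk r a) = Quot.mk s (f a) := rfl

lemma nat_card_subtype_congr {α β : Type*} (e : α ≃ β) {p : α → Prop} {q : β → Prop}
    (h : ∀ a, p a ↔ q (e a)) : Nat.card {a // p a} = Nat.card {b // q b} :=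
  Nat.card_congr (e.subtypeEquiv h)

lemma nat_card_subtype_sum {α β : Type*} [Finite α] [Finite β] (p : α ⊕ β → Prop) :
    Nat.card {x : α ⊕ β // p x}
      = Nat.card {a // p (Sum.inl a)} + Nat.card {b // p (Sum.inr b)} := by
  rw [Nat.card_congr (Equiv.subtypeSum (p := p)), Nat.card_sum]

lemma nat_card_flip {α : Type*} [Finite α] (p : α → Prop) (a : α) (ha : p a) :
    Nat.card {x // p x} = Nat.card {x // p x ∧ x ≠ a} + 1 := by
  classical
  haveI := Fintype.ofFinite α
  simp only [Nat.card_eq_fintype_card, Fintype.card_subtype]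
  have h1 : Finset.univ.filter (fun x => p x ∧ x ≠ a)
      = (Finset.univ.filter (fun x => p x)).erase a := by
    ext x
    simp only [Finset.mem_filter, Finset.mem_erase, Finset.mem_univ, true_and]
    tauto
  rw [h1, Finset.card_erase_of_mem (by simp [ha])]
  have h2 : 0 < (Finset.univ.filter (fun x => p x)).card :=
    Finset.card_pos.2 ⟨a, by simp [ha]⟩
  omega

lemma nat_card_flip' {α : Type*} [Finite α] (p : α → Prop) (a : α) (ha : p a) :
    Nat.card {x // ¬(p x ∧ x ≠ a)} = Nat.card {x // ¬ p x} + 1 := by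
  classical
  haveI := Fintype.ofFinite α
  simp only [Nat.card_eq_fintype_card, Fintype.card_subtype]
  have h1 : Finset.univ.filter (fun x => ¬(p x ∧ x ≠ a))
      = insert a (Finset.univ.filter (fun x => ¬ p x)) := by
    ext x
    simp only [Finset.mem_filter, Finset.mem_insert, Finset.mem_univ, true_and]
    by_cases hx : x = a
    · simp [hx, ha]
    · simp [hx]
  rw [h1, Finset.card_insert_of_notMem (by simp [ha])]

lemma zrank_le_two (H : AddSubgroup (ℤ × ℤ)) : zrank H ≤ 2 := by
  have := Submodule.finrank_le (R := ℤ) (M := ℤ × ℤ) (AddSubgroup.toIntSubmodule H)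
  simpa [zrank] using this

lemma zrank_bot : zrank ⊥ = 0 := by
  have : AddSubgroup.toIntSubmodule (⊥ : AddSubgroup (ℤ × ℤ)) = ⊥ := by
    ext x; simp
  rw [zrank, this]
  simp

lemma one_le_zrank {H : AddSubgroup (ℤ × ℤ)} {x : ℤ × ℤ} (hx : x ∈ H) (hx0 : x ≠ 0) :
    1 ≤ zrank H := by
  by_contra h
  have h0 : zrank H = 0 := by omega
  rw [zrank, Module.finrank_zero_iff] at h0
  exact hx0 (congrArg Subtype.val
    (h0.elim (⟨x, hx⟩ : AddSubgroup.toIntSubmodule H) ⟨0, (AddSubgroup.toIntSubmodule H).zero_mem⟩))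

lemma two_le_zrank {H : AddSubgroup (ℤ × ℤ)} {x y : ℤ × ℤ} (hx : x ∈ H) (hy : y ∈ H)
    (hind : LinearIndependent ℤ ![x, y]) : 2 ≤ zrank H := by
  let f : Fin 2 → AddSubgroup.toIntSubmodule H := ![⟨x, hx⟩, ⟨y, hy⟩]
  have hcomp : (AddSubgroup.toIntSubmodule H).subtype ∘ f = ![x, y] := by
    funext i
    fin_cases i <;> rfl
  have hf : LinearIndependent ℤ f := by
    apply LinearIndependent.of_comp ((AddSubgroup.toIntSubmodule H).subtype)
    rw [hcomp]
    exact hind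
  have := hf.fintype_card_le_finrank
  simpa [zrank] using this

lemma pair_indep {a b : ℤ × ℤ} (ha : a ∈ ({(1,0),(0,1),(1,1)} : Set (ℤ × ℤ)))
    (hb : b ∈ ({(1,0),(0,1),(1,1)} : Set (ℤ × ℤ))) (hab : a ≠ b) :
    LinearIndependent ℤ ![a, b] := by
  rw [LinearIndependent.pair_iff]
  intro s t hst
  rcases ha with rfl | rfl | rfl <;> rcases hb with rfl | rfl | rfl <;>
    first
      | exact absurd rfl hab
      | (constructor <;>
          · have h1 := congrArg Prod.fst hst
            have h2 := congrArg Prod.snd hst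
            simp [Prod.smul_def] at h1 h2 ⊢
            omega)

end Helpers


namespace CGraph

variable {Γ : Type} [AddCommGroup Γ]

section Generic

variable {G : CGraph Γ} {S T : Finset (Fin G.m)}

lemma liftStep_symm {x y} (h : G.liftStep S x y) : G.liftStep S y x := by
  obtain ⟨e, he, h | h⟩ := h
  · exact ⟨e, he, Or.inr ⟨h.2.1, h.1, by rw [h.2.2]; abel⟩⟩
  · exact ⟨e, he, Or.inl ⟨h.2.1, h.1, by rw [h.2.2]; abel⟩⟩

lemma liftStep_shift (t : Γ) {x y} (h : G.liftStep S x y) :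
    G.liftStep S (x.1, x.2 + t) (y.1, y.2 + t) := by
  obtain ⟨e, he, h | h⟩ := h
  · exact ⟨e, he, Or.inl ⟨h.1, h.2.1, by simp only [h.2.2]; abel⟩⟩
  · exact ⟨e, he, Or.inr ⟨h.1, h.2.1, by simp only [h.2.2]; abel⟩⟩

lemma walk_shift (t : Γ) {x y} (h : ReflTransGen (G.liftStep S) x y) :
    ReflTransGen (G.liftStep S) (x.1, x.2 + t) (y.1, y.2 + t) :=
  ReflTransGen.lift (r := G.liftStep S) (p := G.liftStep S) (fun p : Fin G.n × Γ => (p.1, p.2 + t))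
    (fun _ _ h => liftStep_shift t h) _ _ h

lemma walk_symm {x y} (h : ReflTransGen (G.liftStep S) x y) :
    ReflTransGen (G.liftStep S) y x :=
  (@ReflTransGen.stdSymm _ (G.liftStep S) ⟨fun _ _ h => liftStep_symm h⟩).symm _ _ h

lemma liftStep_mono (hTS : T ⊆ S) {x y} (h : G.liftStep T x y) : G.liftStep S x y := by
  obtain ⟨e, he, h⟩ := h; exact ⟨e, hTS he, h⟩

lemma walk_mono (hTS : T ⊆ S) {x y} (h : ReflTransGen (G.liftStep T) x y) :
    ReflTransGen (G.liftStep S) x y :=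
  ReflTransGen.mono (fun _ _ h => liftStep_mono hTS h) _ _ h

/-- Reachability in the subgraph `S`. -/
def Reach (G : CGraph Γ) (S : Finset (Fin G.m)) (v w : Fin G.n) : Prop :=
  ∃ g, ReflTransGen (G.liftStep S) (v, 0) (w, g)

lemma Reach.refl (v : Fin G.n) : G.Reach S v v := ⟨0, .refl⟩

lemma Reach.symm {v w} (h : G.Reach S v w) : G.Reach S w v := by
  obtain ⟨g, hw⟩ := h
  refine ⟨-g, ?_⟩
  have := walk_shift (-g) (walk_symm hw)
  simpa using this

lemma Reach.trans {v w x} (h : G.Reach S v w) (h' : G.Reach S w x) : G.Reach S v x := by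
  obtain ⟨g, hw⟩ := h
  obtain ⟨g', hw'⟩ := h'
  refine ⟨g' + g, hw.trans ?_⟩
  have := walk_shift g hw'
  simpa using this

lemma reach_of_liftStep {v w : Fin G.n} {a b : Γ} (h : G.liftStep S (v, a) (w, b)) :
    G.Reach S v w := by
  refine ⟨b - a, ReflTransGen.single ?_⟩
  have := liftStep_shift (-a) h
  simpa [sub_eq_add_neg] using this

lemma walk_mem_gainGroup {v : Fin G.n} {g : Γ}
    (h : ReflTransGen (G.liftStep S) (v, 0) (v, g)) : g ∈ G.gainGroup S v :=
  AddSubgroup.subset_closure h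

lemma gainGroup_eq_bot_iff {v : Fin G.n} :
    G.gainGroup S v = ⊥ ↔ ∀ g, ReflTransGen (G.liftStep S) (v, 0) (v, g) → g = 0 := by
  rw [gainGroup, AddSubgroup.closure_eq_bot_iff]
  constructor
  · intro h g hg; exact h hg
  · intro h g hg; exact h g hg

lemma gainGroup_mono (hTS : T ⊆ S) (v : Fin G.n) : G.gainGroup T v ≤ G.gainGroup S v :=
  AddSubgroup.closure_mono (fun g hg => walk_mono hTS hg)

lemma gainSet_subset_of_reach {v w} (h : G.Reach S v w) :
    {g : Γ | ReflTransGen (G.liftStep S) (v, 0) (v, g)} ⊆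
      {g : Γ | ReflTransGen (G.liftStep S) (w, 0) (w, g)} := by
  obtain ⟨g₀, hw⟩ := h
  intro g hg
  have h1 : ReflTransGen (G.liftStep S) (w, 0) (v, -g₀) := by
    have := walk_shift (-g₀) (walk_symm hw); simpa using this
  have h2 : ReflTransGen (G.liftStep S) (v, -g₀) (v, g + -g₀) := by
    have := walk_shift (-g₀) hg; simpa using this
  have h3 : ReflTransGen (G.liftStep S) (v, g + -g₀) (w, g) := by
    have := walk_shift (g + -g₀) hw
    simpa [add_comm, add_assoc, add_left_comm] using this
  exact (h1.trans h2).trans h3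

lemma gainGroup_eq_of_reach {v w} (h : G.Reach S v w) :
    G.gainGroup S v = G.gainGroup S w := by
  apply le_antisymm
  · exact AddSubgroup.closure_mono (gainSet_subset_of_reach h)
  · exact AddSubgroup.closure_mono (gainSet_subset_of_reach h.symm)

lemma mem_verts_of_liftStep {x y} (h : G.liftStep S x y) :
    x.1 ∈ G.verts S ∧ y.1 ∈ G.verts S := by
  obtain ⟨e, he, ⟨h1, h2, _⟩ | ⟨h1, h2, _⟩⟩ := h <;>
    constructor <;> simp only [verts, Finset.mem_union, Finset.mem_image]
  · exact Or.inl ⟨e, he, h1⟩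
  · exact Or.inr ⟨e, he, h2⟩
  · exact Or.inr ⟨e, he, h1⟩
  · exact Or.inl ⟨e, he, h2⟩

lemma adj_of_liftStep {x y : Fin G.n × Γ} (h : G.liftStep S x y)
    (hx : x.1 ∈ G.verts S) (hy : y.1 ∈ G.verts S) :
    G.adj S ⟨x.1, hx⟩ ⟨y.1, hy⟩ := by
  obtain ⟨e, he, ⟨h1, h2, _⟩ | ⟨h1, h2, _⟩⟩ := h
  · exact ⟨e, he, Or.inl ⟨h1, h2⟩⟩
  · exact ⟨e, he, Or.inr ⟨h2, h1⟩⟩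

lemma liftStep_of_adj {x y : {v : Fin G.n // v ∈ G.verts S}} (h : G.adj S x y) :
    ∃ g, G.liftStep S (x.1, 0) (y.1, g) := by
  obtain ⟨e, he, ⟨h1, h2⟩ | ⟨h1, h2⟩⟩ := h
  · exact ⟨G.color e, e, he, Or.inl ⟨h1, h2, (zero_add _).symm⟩⟩
  · exact ⟨-G.color e, e, he, Or.inr ⟨h2, h1, by rw [zero_sub]⟩⟩

/-- From a walk we get equality of components. -/
lemma mk_eq_of_walk {v : Fin G.n} (hv : v ∈ G.verts S) :
    ∀ x, ReflTransGen (G.liftStep S) (v, 0) x → ∀ hx : x.1 ∈ G.verts S,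
      Quot.mk (G.adj S) ⟨v, hv⟩ = Quot.mk (G.adj S) ⟨x.1, hx⟩ := by
  intro x hwalk
  induction hwalk with
  | refl => intro _; rfl
  | tail p step ih =>
    intro hx
    have hy := (mem_verts_of_liftStep step).1
    exact (ih hy).trans (Quot.sound (adj_of_liftStep step hy hx))

lemma mk_eq_of_reach {v w : Fin G.n} (hv : v ∈ G.verts S) (hw : w ∈ G.verts S)
    (h : G.Reach S v w) : Quot.mk (G.adj S) ⟨v, hv⟩ = Quot.mk (G.adj S) ⟨w, hw⟩ := by
  obtain ⟨g, hwalk⟩ := h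
  exact mk_eq_of_walk hv _ hwalk hw

lemma reach_of_eqvGen {x y : {v : Fin G.n // v ∈ G.verts S}}
    (h : Relation.EqvGen (G.adj S) x y) : G.Reach S x.1 y.1 := by
  induction h with
  | rel a b hab =>
    obtain ⟨g, hs⟩ := liftStep_of_adj hab
    exact reach_of_liftStep hs
  | refl a => exact Reach.refl _
  | symm a b _ ih => exact Reach.symm ih
  | trans a b c _ _ ih1 ih2 => exact Reach.trans ih1 ih2

lemma reach_of_mk_eq {x y : {v : Fin G.n // v ∈ G.verts S}}
    (h : Quot.mk (G.adj S) x = Quot.mk (G.adj S) y) : G.Reach S x.1 y.1 :=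
  reach_of_eqvGen (Quot.eq.mp h)

lemma trivComp_mk {x : {v : Fin G.n // v ∈ G.verts S}} :
    G.TrivComp S (Quot.mk (G.adj S) x) ↔ G.gainGroup S x.1 = ⊥ := by
  constructor
  · rintro ⟨v, hq, hbot⟩
    rw [← gainGroup_eq_of_reach (reach_of_mk_eq hq)]
    exact hbot
  · intro h; exact ⟨x, rfl, h⟩

/-- Walk confinement: if every edge of `S` touching `W` lies in `T` with both
endpoints in `W`, then walks from a vertex of `W` stay in `W` and use only `T`. -/
lemma walk_confine {W : Set (Fin G.n)}
    (hW : ∀ e ∈ S, (G.tail e ∈ W ∨ G.head e ∈ W) → e ∈ T ∧ G.tail e ∈ W ∧ G.head e ∈ W)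
    {v : Fin G.n} (hv : v ∈ W) :
    ∀ x, ReflTransGen (G.liftStep S) (v, 0) x →
      ReflTransGen (G.liftStep T) (v, 0) x ∧ x.1 ∈ W := by
  intro x hwalk
  induction hwalk with
  | refl => exact ⟨.refl, hv⟩
  | tail p step ih =>
    rename_i y z
    obtain ⟨e, he, hor⟩ := step
    have key : e ∈ T ∧ G.tail e ∈ W ∧ G.head e ∈ W := by
      apply hW e he
      rcases hor with ⟨h1, _, _⟩ | ⟨h1, _, _⟩
      · exact Or.inl (h1 ▸ ih.2)
      · exact Or.inr (h1 ▸ ih.2)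
    refine ⟨ih.1.tail ⟨e, key.1, hor⟩, ?_⟩
    rcases hor with ⟨_, h2, _⟩ | ⟨_, h2, _⟩
    · exact h2 ▸ key.2.2
    · exact h2 ▸ key.2.1

lemma gainGroup_eq_of_confine (hTS : T ⊆ S) {W : Set (Fin G.n)}
    (hW : ∀ e ∈ S, (G.tail e ∈ W ∨ G.head e ∈ W) → e ∈ T ∧ G.tail e ∈ W ∧ G.head e ∈ W)
    {v : Fin G.n} (hv : v ∈ W) : G.gainGroup S v = G.gainGroup T v := by
  apply le_antisymm
  · exact AddSubgroup.closure_mono (fun g hg => (walk_confine hW hv _ hg).1)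
  · exact gainGroup_mono hTS v

instance compsFinite (G : CGraph Γ) (S : Finset (Fin G.m)) : Finite (G.comps S) :=
  Finite.of_surjective (Quot.mk (G.adj S)) (fun q => Quot.exists_rep q)

lemma verts_empty (G : CGraph Γ) : G.verts (∅ : Finset (Fin G.m)) = ∅ := by
  simp [verts]

lemma comps_isEmpty (G : CGraph Γ) : IsEmpty (G.comps (∅ : Finset (Fin G.m))) := by
  constructor
  intro q
  induction q using Quot.ind with
  | _ a =>
    obtain ⟨v, hv⟩ := a
    rw [G.verts_empty] at hv
    exact Finset.notMem_empty v hv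

lemma c0_empty (G : CGraph Γ) : G.c0 (∅ : Finset (Fin G.m)) = 0 := by
  haveI := G.comps_isEmpty
  exact Nat.card_of_isEmpty

lemma c1_empty (G : CGraph Γ) : G.c1 (∅ : Finset (Fin G.m)) = 0 := by
  haveI := G.comps_isEmpty
  exact Nat.card_of_isEmpty

end Generic

end CGraph

namespace CGraph

section Loops

open Relation

variable {G : CGraph (ℤ × ℤ)} {u : Fin G.n}

/-- The embedding of old edges into the graph with three added loops. -/
def emb (G : CGraph (ℤ × ℤ)) (u : Fin G.n) : Fin G.m ↪ Fin ((G.addThreeLoops u).m) :=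
  ⟨fun e => ⟨e.1, Nat.lt_of_lt_of_le e.2 (by show G.m ≤ G.m + 3; omega)⟩, by
    intro a b h
    apply Fin.ext
    have := congrArg Fin.val h
    simpa using this⟩

@[simp] lemma tail_emb (e : Fin G.m) :
    (G.addThreeLoops u).tail (emb G u e) = G.tail e := by
  exact dif_pos e.2

@[simp] lemma head_emb (e : Fin G.m) :
    (G.addThreeLoops u).head (emb G u e) = G.head e := by
  exact dif_pos e.2

@[simp] lemma color_emb (e : Fin G.m) :
    (G.addThreeLoops u).color (emb G u e) = G.color e := by
  exact dif_pos e.2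

lemma liftStep_map (T : Finset (Fin G.m)) :
    (G.addThreeLoops u).liftStep (T.map (emb G u)) = G.liftStep T := by
  funext x y
  apply propext
  constructor
  · rintro ⟨e, he, h⟩
    rw [Finset.mem_map] at he
    obtain ⟨e₀, he₀, rfl⟩ := he
    refine ⟨e₀, he₀, ?_⟩
    simp at h; exact h
  · rintro ⟨e₀, he₀, h⟩
    refine ⟨emb G u e₀, Finset.mem_map_of_mem _ he₀, ?_⟩
    simp; exact h

lemma verts_map (T : Finset (Fin G.m)) :
    (G.addThreeLoops u).verts (T.map (emb G u)) = G.verts T := by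
  have h1 : (G.addThreeLoops u).tail ∘ emb G u = G.tail := funext tail_emb
  have h2 : (G.addThreeLoops u).head ∘ emb G u = G.head := funext head_emb
  simp only [verts, Finset.map_eq_image, Finset.image_image, h1, h2]
  rfl

lemma gainGroup_map (T : Finset (Fin G.m)) (v : Fin G.n) :
    (G.addThreeLoops u).gainGroup (T.map (emb G u)) v = G.gainGroup T v := by
  unfold gainGroup
  rw [liftStep_map]
  rfl

lemma adj_map {T : Finset (Fin G.m)}
    {a b : {v : Fin (G.addThreeLoops u).n // v ∈ (G.addThreeLoops u).verts (T.map (emb G u))}}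
    (h : (G.addThreeLoops u).adj (T.map (emb G u)) a b)
    (ha : a.1 ∈ G.verts T) (hb : b.1 ∈ G.verts T) :
    G.adj T ⟨a.1, ha⟩ ⟨b.1, hb⟩ := by
  obtain ⟨e, he, hor⟩ := h
  rw [Finset.mem_map] at he
  obtain ⟨e₀, he₀, rfl⟩ := he
  refine ⟨e₀, he₀, ?_⟩
  simp at hor; exact hor

lemma adj_map' {T : Finset (Fin G.m)} {a b : {v : Fin G.n // v ∈ G.verts T}}
    (h : G.adj T a b) (ha : a.1 ∈ (G.addThreeLoops u).verts (T.map (emb G u)))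
    (hb : b.1 ∈ (G.addThreeLoops u).verts (T.map (emb G u))) :
    (G.addThreeLoops u).adj (T.map (emb G u)) ⟨a.1, ha⟩ ⟨b.1, hb⟩ := by
  obtain ⟨e₀, he₀, hor⟩ := h
  refine ⟨emb G u e₀, Finset.mem_map_of_mem _ he₀, ?_⟩
  simp; exact hor

/-- The components of an embedded subgraph agree with those of the original. -/
def compsMapEquiv (T : Finset (Fin G.m)) :
    (G.addThreeLoops u).comps (T.map (emb G u)) ≃ G.comps T := by
  refine quotCongr (Equiv.subtypeEquiv (Equiv.refl _)
    (fun v => by rw [verts_map (u := u) T]; rfl)) (fun a b h => ?_) (fun a b h => ?_)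
  · exact Relation.EqvGen.rel _ _ (adj_map h _ _)
  · exact Relation.EqvGen.rel _ _ (adj_map' h _ _)

lemma trivComp_map (T : Finset (Fin G.m)) (x : (G.addThreeLoops u).comps (T.map (emb G u))) :
    (G.addThreeLoops u).TrivComp (T.map (emb G u)) x ↔ G.TrivComp T (compsMapEquiv T x) := by
  induction x using Quot.ind with
  | _ a =>
    rw [show (compsMapEquiv T) (Quot.mk _ a) = Quot.mk _ ⟨a.1, _⟩ from rfl]
    rw [trivComp_mk, trivComp_mk]
    exact Iff.of_eq (congrArg (· = ⊥) (gainGroup_map (u := u) T a.1))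

lemma c0_map (T : Finset (Fin G.m)) :
    (G.addThreeLoops u).c0 (T.map (emb G u)) = G.c0 T :=
  nat_card_subtype_congr (compsMapEquiv T) (fun x => trivComp_map T x)

lemma c1_map (T : Finset (Fin G.m)) :
    (G.addThreeLoops u).c1 (T.map (emb G u)) = G.c1 T :=
  nat_card_subtype_congr (compsMapEquiv T) (fun x => not_congr (trivComp_map T x))

end Loops

end CGraph

namespace CGraph

section LoopsC

open Relation

variable {G : CGraph (ℤ × ℤ)} {u : Fin G.n}

/-- A subtype equivalence from a pointwise iff. -/
def subtypeIff {α : Type*} {p q : α → Prop} (h : ∀ a, p a ↔ q a) :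
    {a // p a} ≃ {a // q a} where
  toFun x := ⟨x.1, (h _).1 x.2⟩
  invFun x := ⟨x.1, (h _).2 x.2⟩
  left_inv x := rfl
  right_inv x := rfl

/-- The three loop edges. -/
def lIdx (G : CGraph (ℤ × ℤ)) (u : Fin G.n) (i : Fin 3) : Fin ((G.addThreeLoops u).m) :=
  ⟨G.m + i.1, by have : (G.addThreeLoops u).m = G.m + 3 := rfl; omega⟩

def lcolor : Fin 3 → ℤ × ℤ := ![(1, 0), (0, 1), (1, 1)]

def loopsF (G : CGraph (ℤ × ℤ)) (u : Fin G.n) : Finset (Fin ((G.addThreeLoops u).m)) :=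
  {lIdx G u 0, lIdx G u 1, lIdx G u 2}

lemma mem_loopsF {l : Fin ((G.addThreeLoops u).m)} (hl : l ∈ loopsF G u) :
    ∃ i, l = lIdx G u i := by
  rcases Finset.mem_insert.mp hl with h | h
  · exact ⟨0, h⟩
  rcases Finset.mem_insert.mp h with h' | h'
  · exact ⟨1, h'⟩
  · exact ⟨2, Finset.mem_singleton.mp h'⟩

@[simp] lemma tail_lIdx (i : Fin 3) : (G.addThreeLoops u).tail (lIdx G u i) = u := by
  have : ¬ ((lIdx G u i : ℕ) < G.m) := by simp [lIdx]
  simp [addThreeLoops, this]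

@[simp] lemma head_lIdx (i : Fin 3) : (G.addThreeLoops u).head (lIdx G u i) = u := by
  have : ¬ ((lIdx G u i : ℕ) < G.m) := by simp [lIdx]
  simp [addThreeLoops, this]

@[simp] lemma color_lIdx (i : Fin 3) :
    (G.addThreeLoops u).color (lIdx G u i) = lcolor i := by
  fin_cases i <;> simp [addThreeLoops, lIdx, lcolor]

lemma lcolor_mem (i : Fin 3) : lcolor i ∈ ({(1,0),(0,1),(1,1)} : Set (ℤ × ℤ)) := by
  fin_cases i <;> simp [lcolor]

lemma lcolor_ne_zero (i : Fin 3) : lcolor i ≠ 0 := by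
  fin_cases i <;> simp [lcolor]

lemma lcolor_inj {i j : Fin 3} (h : i ≠ j) : lcolor i ≠ lcolor j := by
  fin_cases i <;> fin_cases j <;> simp_all [lcolor] <;> decide

lemma lIdx_inj {i j : Fin 3} (h : lIdx G u i = lIdx G u j) : i = j := by
  apply Fin.ext
  have h' := congrArg Fin.val h
  simp only [lIdx] at h'
  omega

lemma verts_union (G₀ : CGraph (ℤ × ℤ)) (A B : Finset (Fin G₀.m)) :
    G₀.verts (A ∪ B) = G₀.verts A ∪ G₀.verts B := by
  simp only [verts, Finset.image_union]
  ext v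
  simp only [Finset.mem_union]
  tauto

lemma tail_mem_verts (G₀ : CGraph (ℤ × ℤ)) {A : Finset (Fin G₀.m)} {e : Fin G₀.m}
    (he : e ∈ A) : G₀.tail e ∈ G₀.verts A := by
  simp only [verts, Finset.mem_union, Finset.mem_image]
  exact Or.inl ⟨e, he, rfl⟩

lemma head_mem_verts (G₀ : CGraph (ℤ × ℤ)) {A : Finset (Fin G₀.m)} {e : Fin G₀.m}
    (he : e ∈ A) : G₀.head e ∈ G₀.verts A := by
  simp only [verts, Finset.mem_union, Finset.mem_image]
  exact Or.inr ⟨e, he, rfl⟩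

lemma verts_loops {L : Finset (Fin ((G.addThreeLoops u).m))} (hL : L ⊆ loopsF G u)
    (hLne : L.Nonempty) : (G.addThreeLoops u).verts L = {u} := by
  ext v
  simp only [verts, Finset.mem_union, Finset.mem_image, Finset.mem_singleton]
  constructor
  · rintro (⟨l, hl, rfl⟩ | ⟨l, hl, rfl⟩) <;>
    · obtain ⟨i, rfl⟩ := mem_loopsF (hL hl)
      simp
      exact Finset.mem_singleton_self _
  · intro hv
    obtain ⟨l, hl⟩ := hLne
    obtain ⟨i, rfl⟩ := mem_loopsF (hL hl)
    rw [Finset.mem_singleton.mp hv]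
    exact Or.inl ⟨lIdx G u i, hl, tail_lIdx i⟩

section Setting

variable {T : Finset (Fin G.m)} {L : Finset (Fin ((G.addThreeLoops u).m))}

lemma verts_union_loops (hL : L ⊆ loopsF G u) (hLne : L.Nonempty) :
    (G.addThreeLoops u).verts (T.map (emb G u) ∪ L) = G.verts T ∪ {u} := by
  rw [verts_union, verts_map, verts_loops hL hLne]
  rfl

lemma loop_step (T : Finset (Fin G.m)) (hL : L ⊆ loopsF G u) {l : Fin ((G.addThreeLoops u).m)}
    (hlL : l ∈ L) (a : ℤ × ℤ) :
    (G.addThreeLoops u).liftStep (T.map (emb G u) ∪ L) (u, a)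
      (u, a + (G.addThreeLoops u).color l) := by
  obtain ⟨i, rfl⟩ := mem_loopsF (hL hlL)
  exact ⟨lIdx G u i, Finset.mem_union_right _ hlL, Or.inl ⟨tail_lIdx i, head_lIdx i, rfl⟩⟩

lemma loop_color_mem_gainGroup (hL : L ⊆ loopsF G u) {l} (hlL : l ∈ L) :
    (G.addThreeLoops u).color l ∈
      (G.addThreeLoops u).gainGroup (T.map (emb G u) ∪ L) u := by
  apply walk_mem_gainGroup
  have := loop_step T hL hlL (0 : ℤ × ℤ)
  rw [zero_add] at this
  exact ReflTransGen.single this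

lemma gainGroup_loops_ne_bot (hL : L ⊆ loopsF G u) (hLne : L.Nonempty) :
    (G.addThreeLoops u).gainGroup (T.map (emb G u) ∪ L) u ≠ ⊥ := by
  obtain ⟨l, hl⟩ := hLne
  intro hbot
  have hmem := loop_color_mem_gainGroup (T := T) hL hl
  rw [hbot, AddSubgroup.mem_bot] at hmem
  obtain ⟨i, rfl⟩ := mem_loopsF (hL hl)
  rw [color_lIdx] at hmem
  exact lcolor_ne_zero i hmem

/-- Steps in the extended graph are old steps or loop steps at `u`. -/
lemma liftStep_union_cases (hL : L ⊆ loopsF G u) {x y}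
    (h : (G.addThreeLoops u).liftStep (T.map (emb G u) ∪ L) x y) :
    G.liftStep T x y ∨ (x.1 = u ∧ y.1 = u) := by
  obtain ⟨e, he, hor⟩ := h
  rcases Finset.mem_union.mp he with he | he
  · left
    rw [← liftStep_map (u := u) T]
    exact ⟨e, he, hor⟩
  · right
    obtain ⟨i, rfl⟩ := mem_loopsF (hL he)
    rcases hor with ⟨h1, h2, _⟩ | ⟨h1, h2, _⟩ <;>
      exact ⟨by rw [← h1]; simp; rfl, by rw [← h2]; simp; rfl⟩

/-- Vertices of `T` not reachable to `u` have unchanged gain group. -/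
lemma gainGroup_union_of_not_reach (hL : L ⊆ loopsF G u) {v : Fin G.n}
    (hv : ¬ (G.addThreeLoops u).Reach (T.map (emb G u) ∪ L) v u) :
    (G.addThreeLoops u).gainGroup (T.map (emb G u) ∪ L) v = G.gainGroup T v := by
  rw [← gainGroup_map (u := u) T v]
  apply gainGroup_eq_of_confine Finset.subset_union_left
    (W := {w | ¬ (G.addThreeLoops u).Reach (T.map (emb G u) ∪ L) w u}) ?_ hv
  intro e he hor
  have hloop : ∀ i, e ≠ lIdx G u i := by
    intro i hei
    have hu : (G.addThreeLoops u).tail e = u ∧ (G.addThreeLoops u).head e = u := by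
      rw [hei]; exact ⟨tail_lIdx i, head_lIdx i⟩
    rcases hor with h | h <;> simp only [hu.1, hu.2, Set.mem_setOf_eq] at h <;>
      exact h (Reach.refl (G := G.addThreeLoops u) u)
  have heT : e ∈ T.map (emb G u) := by
    rcases Finset.mem_union.mp he with h | h
    · exact h
    · obtain ⟨i, hi⟩ := mem_loopsF (hL h)
      exact absurd hi (hloop i)
  have step1 : (G.addThreeLoops u).liftStep (T.map (emb G u) ∪ L)
      ((G.addThreeLoops u).tail e, (0 : ℤ × ℤ))
      ((G.addThreeLoops u).head e, (0 : ℤ × ℤ) + (G.addThreeLoops u).color e) :=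
    ⟨e, he, Or.inl ⟨rfl, rfl, rfl⟩⟩
  have step2 : (G.addThreeLoops u).liftStep (T.map (emb G u) ∪ L)
      ((G.addThreeLoops u).head e, (0 : ℤ × ℤ))
      ((G.addThreeLoops u).tail e, (0 : ℤ × ℤ) - (G.addThreeLoops u).color e) :=
    ⟨e, he, Or.inr ⟨rfl, rfl, rfl⟩⟩
  refine ⟨heT, ?_, ?_⟩
  · intro hr
    rcases hor with h | h
    · exact h hr
    · exact h (Reach.trans (reach_of_liftStep step2) hr)
  · intro hr
    rcases hor with h | h
    · exact h (Reach.trans (reach_of_liftStep step1) hr)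
    · exact h hr

/-- Vertices of `T` have unchanged gain group when `u ∉ verts T`. -/
lemma gainGroup_union_of_not_mem (hL : L ⊆ loopsF G u) (hu : u ∉ G.verts T)
    {v : Fin G.n} (hv : v ∈ G.verts T) :
    (G.addThreeLoops u).gainGroup (T.map (emb G u) ∪ L) v = G.gainGroup T v := by
  rw [← gainGroup_map (u := u) T v]
  have key : ∀ e ∈ T.map (emb G u) ∪ L,
      ((G.addThreeLoops u).tail e ∈ ({w | w ∈ G.verts T} : Set (Fin G.n)) ∨
        (G.addThreeLoops u).head e ∈ ({w | w ∈ G.verts T} : Set (Fin G.n))) →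
      e ∈ T.map (emb G u) ∧
        (G.addThreeLoops u).tail e ∈ ({w | w ∈ G.verts T} : Set (Fin G.n)) ∧
        (G.addThreeLoops u).head e ∈ ({w | w ∈ G.verts T} : Set (Fin G.n)) := by
    intro e he hor
    have heT : e ∈ T.map (emb G u) := by
      rcases Finset.mem_union.mp he with h | h
      · exact h
      · obtain ⟨i, rfl⟩ := mem_loopsF (hL h)
        exfalso
        rcases hor with h' | h' <;> simp only [tail_lIdx, head_lIdx, Set.mem_setOf_eq] at h' <;>
          exact hu h'
    rw [Finset.mem_map] at heT
    obtain ⟨e₀, he₀, rfl⟩ := heT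
    refine ⟨Finset.mem_map_of_mem _ he₀, ?_, ?_⟩
    · show (G.addThreeLoops u).tail ((emb G u) e₀) ∈ G.verts T
      rw [tail_emb]
      exact G.tail_mem_verts he₀
    · show (G.addThreeLoops u).head ((emb G u) e₀) ∈ G.verts T
      rw [head_emb]
      exact G.head_mem_verts he₀
  exact gainGroup_eq_of_confine Finset.subset_union_left key hv

end Setting

end LoopsC

end CGraph

namespace CGraph

section LoopsD

open Relation

variable {G : CGraph (ℤ × ℤ)} {u : Fin G.n}
variable {T : Finset (Fin G.m)} {L : Finset (Fin ((G.addThreeLoops u).m))}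

lemma reach_map_le {v w : Fin G.n} (hv : G.Reach T v w) :
    (G.addThreeLoops u).Reach (T.map (emb G u) ∪ L) v w := by
  obtain ⟨g, hw⟩ := hv
  refine ⟨g, ?_⟩
  apply walk_mono Finset.subset_union_left
  rw [liftStep_map (u := u) T]
  exact hw

lemma mk_eq_of_walk_union (hL : L ⊆ loopsF G u) {v : Fin G.n} (hv : v ∈ G.verts T) :
    ∀ x, ReflTransGen ((G.addThreeLoops u).liftStep (T.map (emb G u) ∪ L)) (v, (0 : ℤ × ℤ)) x →
      ∀ hx : x.1 ∈ G.verts T,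
        Quot.mk (G.adj T) ⟨v, hv⟩ = Quot.mk (G.adj T) ⟨x.1, hx⟩ := by
  intro x hwalk
  induction hwalk with
  | refl => intro _; rfl
  | tail p step ih =>
    rename_i y z
    intro hz
    rcases liftStep_union_cases hL step with hstep | ⟨hy, hz'⟩
    · have hy' : y.1 ∈ G.verts T := (mem_verts_of_liftStep hstep).1
      exact (ih hy').trans (Quot.sound (adj_of_liftStep hstep hy' hz))
    · have hy' : y.1 ∈ G.verts T := by rw [hy, ← hz']; exact hz
      exact (ih hy').trans (congrArg _ (Subtype.ext (hy.trans hz'.symm)))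

lemma mem_verts_union_in (hL : L ⊆ loopsF G u) (huT : u ∈ G.verts T) (v₀ : Fin G.n) :
    v₀ ∈ (G.addThreeLoops u).verts (T.map (emb G u) ∪ L) ↔ v₀ ∈ G.verts T := by
  by_cases hLne : L.Nonempty
  · rw [verts_union_loops hL hLne]
    show v₀ ∈ G.verts T ∪ {u} ↔ v₀ ∈ G.verts T
    simp only [Finset.mem_union, Finset.mem_singleton]
    constructor
    · rintro (h | h)
      · exact h
      · rw [h]; exact huT
    · exact Or.inl
  · rw [Finset.not_nonempty_iff_eq_empty] at hLne
    rw [hLne, Finset.union_empty, verts_map]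
    rfl

lemma adj_in_forward (hL : L ⊆ loopsF G u) (huT : u ∈ G.verts T) :
    ∀ a b, (G.addThreeLoops u).adj (T.map (emb G u) ∪ L) a b →
      Relation.EqvGen (G.adj T) (subtypeIff (mem_verts_union_in hL huT) a)
        (subtypeIff (mem_verts_union_in hL huT) b) := by
  intro a b h
  obtain ⟨e, he, hor⟩ := h
  rcases Finset.mem_union.mp he with he' | he'
  · rw [Finset.mem_map] at he'
    obtain ⟨e₀, he₀, rfl⟩ := he'
    refine Relation.EqvGen.rel _ _ ⟨e₀, he₀, ?_⟩
    simp at hor; exact hor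
  · obtain ⟨i, rfl⟩ := mem_loopsF (hL he')
    have hab : a = b := by
      apply Subtype.ext
      rcases hor with ⟨h1, h2⟩ | ⟨h1, h2⟩
      · have ha : a.1 = u := by rw [← h1]; simp; rfl
        have hb : b.1 = u := by rw [← h2]; simp; rfl
        rw [ha, hb]
      · have ha : a.1 = u := by rw [← h2]; simp; rfl
        have hb : b.1 = u := by rw [← h1]; simp; rfl
        rw [ha, hb]
    rw [hab]
    exact Relation.EqvGen.refl _

lemma adj_in_backward (hL : L ⊆ loopsF G u) (huT : u ∈ G.verts T) :
    ∀ a b, G.adj T a b →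
      Relation.EqvGen ((G.addThreeLoops u).adj (T.map (emb G u) ∪ L))
        ((subtypeIff (mem_verts_union_in hL huT)).symm a)
        ((subtypeIff (mem_verts_union_in hL huT)).symm b) := by
  intro a b h
  obtain ⟨e₀, he₀, hor⟩ := h
  refine Relation.EqvGen.rel _ _
    ⟨emb G u e₀, Finset.mem_union_left _ (Finset.mem_map_of_mem _ he₀), ?_⟩
  simp; exact hor

/-- Components with the loops present, when `u` is a vertex of `T`. -/
def compsEquivIn (hL : L ⊆ loopsF G u) (huT : u ∈ G.verts T) :
    (G.addThreeLoops u).comps (T.map (emb G u) ∪ L) ≃ G.comps T :=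
  quotCongr (subtypeIff (mem_verts_union_in hL huT))
    (adj_in_forward hL huT) (adj_in_backward hL huT)

lemma compsEquivIn_mk (hL : L ⊆ loopsF G u) (huT : u ∈ G.verts T)
    (a : {v : Fin (G.addThreeLoops u).n // v ∈ (G.addThreeLoops u).verts (T.map (emb G u) ∪ L)})
    (ha : (a.1 : Fin G.n) ∈ G.verts T) :
    compsEquivIn hL huT (Quot.mk _ a) = Quot.mk (G.adj T) ⟨a.1, ha⟩ := by
  have h1 : (subtypeIff (mem_verts_union_in hL huT)) a = ⟨a.1, ha⟩ := Subtype.ext rfl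
  show Quot.mk (G.adj T) ((subtypeIff (mem_verts_union_in hL huT)) a) = Quot.mk (G.adj T) ⟨a.1, ha⟩
  exact congrArg _ h1

lemma trivComp_in (hL : L ⊆ loopsF G u) (huT : u ∈ G.verts T) (hLne : L.Nonempty)
    (x : (G.addThreeLoops u).comps (T.map (emb G u) ∪ L)) :
    (G.addThreeLoops u).TrivComp (T.map (emb G u) ∪ L) x ↔
      (G.TrivComp T (compsEquivIn hL huT x) ∧
        compsEquivIn hL huT x ≠ Quot.mk (G.adj T) ⟨u, huT⟩) := by
  induction x using Quot.ind with
  | _ a =>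
    have haT : (a.1 : Fin G.n) ∈ G.verts T := (mem_verts_union_in hL huT a.1).1 a.2
    rw [compsEquivIn_mk hL huT a haT, trivComp_mk, trivComp_mk]
    by_cases hreach : (G.addThreeLoops u).Reach (T.map (emb G u) ∪ L) a.1 u
    · have h1 : (G.addThreeLoops u).gainGroup (T.map (emb G u) ∪ L) a.1 ≠ ⊥ := by
        rw [gainGroup_eq_of_reach hreach]
        exact gainGroup_loops_ne_bot hL hLne
      have h2 : Quot.mk (G.adj T) ⟨a.1, haT⟩ = Quot.mk (G.adj T) ⟨u, huT⟩ := by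
        obtain ⟨g, hw⟩ := hreach
        exact mk_eq_of_walk_union hL haT _ hw huT
      constructor
      · intro h; exact absurd h h1
      · rintro ⟨_, hne⟩; exact absurd h2 hne
    · rw [gainGroup_union_of_not_reach hL hreach]
      constructor
      · intro h
        refine ⟨h, fun heq => hreach (reach_map_le (reach_of_mk_eq heq))⟩
      · exact And.left

lemma counts_in_triv (hL : L ⊆ loopsF G u) (huT : u ∈ G.verts T) (hLne : L.Nonempty)
    (htriv : G.gainGroup T u = ⊥) :
    G.c0 T = (G.addThreeLoops u).c0 (T.map (emb G u) ∪ L) + 1 ∧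
      (G.addThreeLoops u).c1 (T.map (emb G u) ∪ L) = G.c1 T + 1 := by
  have hcu : G.TrivComp T (Quot.mk (G.adj T) ⟨u, huT⟩) := trivComp_mk.2 htriv
  have h0 : (G.addThreeLoops u).c0 (T.map (emb G u) ∪ L)
      = Nat.card {x : G.comps T //
          G.TrivComp T x ∧ x ≠ Quot.mk (G.adj T) ⟨u, huT⟩} :=
    nat_card_subtype_congr (compsEquivIn hL huT) (fun x => trivComp_in hL huT hLne x)
  have h1 : (G.addThreeLoops u).c1 (T.map (emb G u) ∪ L)
      = Nat.card {x : G.comps T //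
          ¬(G.TrivComp T x ∧ x ≠ Quot.mk (G.adj T) ⟨u, huT⟩)} :=
    nat_card_subtype_congr (compsEquivIn hL huT)
      (fun x => not_congr (trivComp_in hL huT hLne x))
  constructor
  · rw [h0]
    exact nat_card_flip _ _ hcu
  · rw [h1]
    have := nat_card_flip' (G.TrivComp T) _ hcu
    rw [this]
    rfl

lemma counts_in_nontriv (hL : L ⊆ loopsF G u) (huT : u ∈ G.verts T) (hLne : L.Nonempty)
    (hnt : G.gainGroup T u ≠ ⊥) :
    (G.addThreeLoops u).c0 (T.map (emb G u) ∪ L) = G.c0 T ∧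
      (G.addThreeLoops u).c1 (T.map (emb G u) ∪ L) = G.c1 T := by
  have hcu : ¬ G.TrivComp T (Quot.mk (G.adj T) ⟨u, huT⟩) := by
    intro h
    rw [trivComp_mk] at h
    exact hnt h
  have key : ∀ x, (G.addThreeLoops u).TrivComp (T.map (emb G u) ∪ L) x ↔
      G.TrivComp T (compsEquivIn hL huT x) := by
    intro x
    rw [trivComp_in hL huT hLne x]
    constructor
    · exact And.left
    · intro h
      exact ⟨h, fun heq => hcu (heq ▸ h)⟩
  constructor
  · exact nat_card_subtype_congr (compsEquivIn hL huT) key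
  · exact nat_card_subtype_congr (compsEquivIn hL huT) (fun x => not_congr (key x))

end LoopsD

end CGraph

namespace CGraph

section LoopsE

open Relation

variable {G : CGraph (ℤ × ℤ)} {u : Fin G.n}
variable {T : Finset (Fin G.m)} {L : Finset (Fin ((G.addThreeLoops u).m))}

/-- Forward map on components for the `u ∉ verts T` case. -/
def outFun (T : Finset (Fin G.m)) (L : Finset (Fin ((G.addThreeLoops u).m)))
    (v : {v : Fin (G.addThreeLoops u).n //
      v ∈ (G.addThreeLoops u).verts (T.map (emb G u) ∪ L)}) : G.comps T ⊕ Unit :=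
  haveI : Decidable (v.1 ∈ G.verts T) := Classical.propDecidable _
  if h : v.1 ∈ G.verts T then Sum.inl (Quot.mk (G.adj T) ⟨v.1, h⟩) else Sum.inr ()

lemma outFun_respects (hL : L ⊆ loopsF G u) :
    ∀ a b, (G.addThreeLoops u).adj (T.map (emb G u) ∪ L) a b → outFun T L a = outFun T L b := by
  intro a b h
  obtain ⟨e, he, hor⟩ := h
  rcases Finset.mem_union.mp he with he' | he'
  · rw [Finset.mem_map] at he'
    obtain ⟨e₀, he₀, rfl⟩ := he'
    have hor' : (G.tail e₀ = a.1 ∧ G.head e₀ = b.1) ∨ (G.tail e₀ = b.1 ∧ G.head e₀ = a.1) := by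
      simp at hor; exact hor
    have ha : a.1 ∈ G.verts T := by
      rcases hor' with ⟨h1, _⟩ | ⟨_, h2⟩
      · exact h1 ▸ G.tail_mem_verts he₀
      · exact h2 ▸ G.head_mem_verts he₀
    have hb : b.1 ∈ G.verts T := by
      rcases hor' with ⟨_, h2⟩ | ⟨h1, _⟩
      · exact h2 ▸ G.head_mem_verts he₀
      · exact h1 ▸ G.tail_mem_verts he₀
    unfold outFun
    rw [dif_pos ha, dif_pos hb]
    exact congrArg Sum.inl (Quot.sound ⟨e₀, he₀, hor'⟩)
  · obtain ⟨i, rfl⟩ := mem_loopsF (hL he')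
    have hab : a = b := by
      apply Subtype.ext
      rcases hor with ⟨h1, h2⟩ | ⟨h1, h2⟩
      · rw [← h1, ← h2]; simp; rfl
      · rw [← h2, ← h1]; simp; rfl
    rw [hab]

/-- Inverse map on components for the `u ∉ verts T` case. -/
def outInv (hL : L ⊆ loopsF G u) (hLne : L.Nonempty) :
    G.comps T ⊕ Unit → (G.addThreeLoops u).comps (T.map (emb G u) ∪ L) :=
  Sum.elim
    (Quot.lift
      (fun w => Quot.mk ((G.addThreeLoops u).adj (T.map (emb G u) ∪ L))
        ⟨w.1, by rw [verts_union_loops hL hLne]; exact Finset.mem_union_left _ w.2⟩)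
      (fun w w' h => Quot.sound (by
        obtain ⟨e₀, he₀, hor⟩ := h
        exact ⟨emb G u e₀, Finset.mem_union_left _ (Finset.mem_map_of_mem _ he₀),
          by simp; exact hor⟩)))
    (fun _ => Quot.mk _ ⟨u, by rw [verts_union_loops hL hLne]; exact Finset.mem_union_right _ (Finset.mem_singleton_self u)⟩)

/-- Components with the loops present, when `u` is not a vertex of `T`. -/
def compsEquivOut (hL : L ⊆ loopsF G u) (hLne : L.Nonempty) (huT : u ∉ G.verts T) :
    (G.addThreeLoops u).comps (T.map (emb G u) ∪ L) ≃ G.comps T ⊕ Unit where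
  toFun := Quot.lift (outFun T L) (outFun_respects hL)
  invFun := outInv hL hLne
  left_inv := by
    intro q
    induction q using Quot.ind with
    | _ v =>
      show outInv hL hLne (outFun T L v) = _
      unfold outFun
      by_cases hvT : v.1 ∈ G.verts T
      · rw [dif_pos hvT]
        exact congrArg _ (Subtype.ext rfl)
      · rw [dif_neg hvT]
        have h2 := (Finset.ext_iff.mp (verts_union_loops hL hLne) v.1).mp v.2
        have hvu : v.1 = u := by
          rcases Finset.mem_union.mp h2 with h | h
          · exact absurd h hvT
          · exact Finset.mem_singleton.mp h
        exact congrArg _ (Subtype.ext hvu.symm)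
  right_inv := by
    rintro (q | x)
    · induction q using Quot.ind with
      | _ w =>
        show outFun T L _ = _
        unfold outFun
        exact dif_pos w.2
    · show outFun T L _ = Sum.inr x
      unfold outFun
      exact dif_neg huT

lemma trivComp_out (hL : L ⊆ loopsF G u) (hLne : L.Nonempty) (huT : u ∉ G.verts T)
    (x : (G.addThreeLoops u).comps (T.map (emb G u) ∪ L)) :
    (G.addThreeLoops u).TrivComp (T.map (emb G u) ∪ L) x ↔
      Sum.elim (G.TrivComp T) (fun _ => False) (compsEquivOut hL hLne huT x) := by
  induction x using Quot.ind with
  | _ v =>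
    have hE : compsEquivOut hL hLne huT (Quot.mk _ v) = outFun T L v := rfl
    rw [hE]
    unfold outFun
    by_cases hvT : v.1 ∈ G.verts T
    · rw [dif_pos hvT]; erw [Sum.elim_inl]; rw [trivComp_mk, trivComp_mk,
        gainGroup_union_of_not_mem hL huT hvT]
    · rw [dif_neg hvT]; erw [Sum.elim_inr]; rw [trivComp_mk]
      have h2 := (Finset.ext_iff.mp (verts_union_loops hL hLne) v.1).mp v.2
      have hvu : v.1 = u := by
        rcases Finset.mem_union.mp h2 with h | h
        · exact absurd h hvT
        · exact Finset.mem_singleton.mp h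
      rw [hvu]
      simp only [iff_false]
      exact gainGroup_loops_ne_bot hL hLne

lemma counts_out (hL : L ⊆ loopsF G u) (hLne : L.Nonempty) (huT : u ∉ G.verts T) :
    (G.addThreeLoops u).c0 (T.map (emb G u) ∪ L) = G.c0 T ∧
      (G.addThreeLoops u).c1 (T.map (emb G u) ∪ L) = G.c1 T + 1 := by
  constructor
  · have h0 : (G.addThreeLoops u).c0 (T.map (emb G u) ∪ L)
        = Nat.card {y : G.comps T ⊕ Unit // Sum.elim (G.TrivComp T) (fun _ => False) y} :=
      nat_card_subtype_congr (compsEquivOut hL hLne huT) (trivComp_out hL hLne huT)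
    rw [h0, nat_card_subtype_sum]
    have e1 : Nat.card {a : G.comps T // Sum.elim (G.TrivComp T) (fun _ : Unit => False) (Sum.inl a)}
        = G.c0 T := nat_card_subtype_congr (Equiv.refl _) (fun a => by simp)
    have e2 : Nat.card {b : Unit // Sum.elim (G.TrivComp T) (fun _ : Unit => False) (Sum.inr b)} = 0 := by
      haveI : IsEmpty {b : Unit // Sum.elim (G.TrivComp T) (fun _ : Unit => False) (Sum.inr b)} :=
        ⟨fun x => x.2⟩
      exact Nat.card_of_isEmpty
    rw [e1, e2]
    omega
  · have h1 : (G.addThreeLoops u).c1 (T.map (emb G u) ∪ L)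
        = Nat.card {y : G.comps T ⊕ Unit // ¬ Sum.elim (G.TrivComp T) (fun _ => False) y} :=
      nat_card_subtype_congr (compsEquivOut hL hLne huT)
        (fun x => not_congr (trivComp_out hL hLne huT x))
    rw [h1, nat_card_subtype_sum]
    have e1 : Nat.card {a : G.comps T // ¬ Sum.elim (G.TrivComp T) (fun _ : Unit => False) (Sum.inl a)}
        = G.c1 T := nat_card_subtype_congr (Equiv.refl _) (fun a => by simp)
    have e2 : Nat.card {b : Unit // ¬ Sum.elim (G.TrivComp T) (fun _ : Unit => False) (Sum.inr b)} = 1 := by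
      haveI : Unique {b : Unit // ¬ Sum.elim (G.TrivComp T) (fun _ : Unit => False) (Sum.inr b)} :=
        ⟨⟨⟨(), fun h => h⟩⟩, fun x => Subtype.ext rfl⟩
      exact Nat.card_unique
    rw [e1, e2]

lemma gainGroup_le_Lambda (G₀ : CGraph (ℤ × ℤ)) (S : Finset (Fin G₀.m)) {v : Fin G₀.n}
    (hv : v ∈ G₀.verts S) : G₀.gainGroup S v ≤ G₀.Lambda S :=
  le_iSup₂ (f := fun w (_ : w ∈ G₀.verts S) => G₀.gainGroup S w) v hv

lemma Lambda_eq_bot {G₀ : CGraph (ℤ × ℤ)} {S : Finset (Fin G₀.m)}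
    (h : ∀ v ∈ G₀.verts S, G₀.gainGroup S v = ⊥) : G₀.Lambda S = ⊥ := by
  rw [Lambda, iSup_eq_bot]
  intro v
  rw [iSup_eq_bot]
  intro hv
  exact h v hv

lemma card_loopsF_le : (loopsF G u).card ≤ 3 := by
  apply le_trans (Finset.card_insert_le _ _)
  apply Nat.succ_le_succ
  apply le_trans (Finset.card_insert_le _ _)
  simp

lemma loop_card_le_max (hL : L ⊆ loopsF G u) (hLne : L.Nonempty) :
    (L.card : ℤ) ≤
      max (2 * (zrank ((G.addThreeLoops u).Lambda (T.map (emb G u) ∪ L)) : ℤ) - 1) 0 := by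
  have hcard3 : L.card ≤ 3 := le_trans (Finset.card_le_card hL) card_loopsF_le
  have huv : u ∈ (G.addThreeLoops u).verts (T.map (emb G u) ∪ L) := by
    rw [verts_union_loops hL hLne]; exact Finset.mem_union_right _ (Finset.mem_singleton_self u)
  have hle := gainGroup_le_Lambda (G.addThreeLoops u) (T.map (emb G u) ∪ L) huv
  by_cases h2 : 2 ≤ L.card
  · obtain ⟨l₁, hl₁, l₂, hl₂, hne⟩ := (Finset.one_lt_card (s := L)).mp (by omega)
    obtain ⟨i, rfl⟩ := mem_loopsF (hL hl₁)
    obtain ⟨j, rfl⟩ := mem_loopsF (hL hl₂)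
    have hij : i ≠ j := fun h => hne (by rw [h])
    have hind : LinearIndependent ℤ ![(G.addThreeLoops u).color (lIdx G u i),
        (G.addThreeLoops u).color (lIdx G u j)] := by
      rw [color_lIdx, color_lIdx]
      exact pair_indep (lcolor_mem i) (lcolor_mem j) (lcolor_inj hij)
    have hz : 2 ≤ zrank ((G.addThreeLoops u).Lambda (T.map (emb G u) ∪ L)) :=
      two_le_zrank (hle (loop_color_mem_gainGroup hL hl₁))
        (hle (loop_color_mem_gainGroup hL hl₂)) hind
    have : (L.card : ℤ) ≤ 3 := by exact_mod_cast hcard3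
    have : (2 : ℤ) ≤ (zrank ((G.addThreeLoops u).Lambda (T.map (emb G u) ∪ L)) : ℤ) := by
      exact_mod_cast hz
    apply le_max_of_le_left
    omega
  · have h1 : L.card = 1 := by
      have := Finset.card_pos.mpr hLne
      omega
    obtain ⟨l, hl⟩ := hLne
    obtain ⟨i, rfl⟩ := mem_loopsF (hL hl)
    have hz : 1 ≤ zrank ((G.addThreeLoops u).Lambda (T.map (emb G u) ∪ L)) :=
      one_le_zrank (hle (loop_color_mem_gainGroup hL hl))
        (by rw [color_lIdx]; exact lcolor_ne_zero i)
    have : (1 : ℤ) ≤ (zrank ((G.addThreeLoops u).Lambda (T.map (emb G u) ∪ L)) : ℤ) := by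
      exact_mod_cast hz
    rw [h1]
    apply le_max_of_le_left
    omega

end LoopsE

end CGraph

namespace CGraph

section Split

open Relation

variable {G₀ : CGraph (ℤ × ℤ)} {A B : Finset (Fin G₀.m)}

/-- In a vertex-disjoint union, gain groups of `A`-vertices are computed in `A`. -/
lemma gainGroup_union_left (hd : ∀ v, v ∈ G₀.verts A → v ∈ G₀.verts B → False)
    {v : Fin G₀.n} (hv : v ∈ G₀.verts A) :
    G₀.gainGroup (A ∪ B) v = G₀.gainGroup A v := by
  have key : ∀ e ∈ A ∪ B, (G₀.tail e ∈ ({w | w ∈ G₀.verts A} : Set (Fin G₀.n)) ∨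
      G₀.head e ∈ ({w | w ∈ G₀.verts A} : Set (Fin G₀.n))) →
      e ∈ A ∧ G₀.tail e ∈ ({w | w ∈ G₀.verts A} : Set (Fin G₀.n)) ∧
        G₀.head e ∈ ({w | w ∈ G₀.verts A} : Set (Fin G₀.n)) := by
    intro e he hor
    rcases Finset.mem_union.mp he with he' | he'
    · exact ⟨he', G₀.tail_mem_verts he', G₀.head_mem_verts he'⟩
    · exfalso
      rcases hor with h | h
      · exact hd _ h (G₀.tail_mem_verts he')
      · exact hd _ h (G₀.head_mem_verts he')
  exact gainGroup_eq_of_confine Finset.subset_union_left key hv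

lemma gainGroup_union_right (hd : ∀ v, v ∈ G₀.verts A → v ∈ G₀.verts B → False)
    {v : Fin G₀.n} (hv : v ∈ G₀.verts B) :
    G₀.gainGroup (A ∪ B) v = G₀.gainGroup B v := by
  rw [Finset.union_comm]
  exact gainGroup_union_left (fun w h1 h2 => hd w h2 h1) hv

def splitFun (A B : Finset (Fin G₀.m))
    (v : {v : Fin G₀.n // v ∈ G₀.verts (A ∪ B)}) : G₀.comps A ⊕ G₀.comps B :=
  if h : v.1 ∈ G₀.verts A then Sum.inl (Quot.mk (G₀.adj A) ⟨v.1, h⟩)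
  else Sum.inr (Quot.mk (G₀.adj B) ⟨v.1, by
    have := (Finset.ext_iff.mp (verts_union G₀ A B) v.1).mp v.2
    rcases Finset.mem_union.mp this with h' | h'
    · exact absurd h' h
    · exact h'⟩)

lemma splitFun_respects (hd : ∀ v, v ∈ G₀.verts A → v ∈ G₀.verts B → False) :
    ∀ a b, G₀.adj (A ∪ B) a b → splitFun A B a = splitFun A B b := by
  intro a b h
  obtain ⟨e, he, hor⟩ := h
  have hor' : (G₀.tail e = a.1 ∧ G₀.head e = b.1) ∨ (G₀.tail e = b.1 ∧ G₀.head e = a.1) := hor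
  rcases Finset.mem_union.mp he with he' | he'
  · have ha : a.1 ∈ G₀.verts A := by
      rcases hor' with ⟨h1, _⟩ | ⟨_, h2⟩
      · exact h1 ▸ G₀.tail_mem_verts he'
      · exact h2 ▸ G₀.head_mem_verts he'
    have hb : b.1 ∈ G₀.verts A := by
      rcases hor' with ⟨_, h2⟩ | ⟨h1, _⟩
      · exact h2 ▸ G₀.head_mem_verts he'
      · exact h1 ▸ G₀.tail_mem_verts he'
    unfold splitFun
    rw [dif_pos ha, dif_pos hb]
    exact congrArg Sum.inl (Quot.sound ⟨e, he', hor'⟩)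
  · have ha : a.1 ∈ G₀.verts B := by
      rcases hor' with ⟨h1, _⟩ | ⟨_, h2⟩
      · exact h1 ▸ G₀.tail_mem_verts he'
      · exact h2 ▸ G₀.head_mem_verts he'
    have hb : b.1 ∈ G₀.verts B := by
      rcases hor' with ⟨_, h2⟩ | ⟨h1, _⟩
      · exact h2 ▸ G₀.head_mem_verts he'
      · exact h1 ▸ G₀.tail_mem_verts he'
    unfold splitFun
    rw [dif_neg (fun hA => hd _ hA ha), dif_neg (fun hA => hd _ hA hb)]
    refine congrArg Sum.inr (Quot.sound ⟨e, he', ?_⟩)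
    exact hor'

def splitInv (A B : Finset (Fin G₀.m)) :
    G₀.comps A ⊕ G₀.comps B → G₀.comps (A ∪ B) :=
  Sum.elim
    (Quot.lift (fun w => Quot.mk (G₀.adj (A ∪ B)) ⟨w.1, by
        have := (Finset.ext_iff.mp (verts_union G₀ A B) w.1).mpr
          (Finset.mem_union_left _ w.2)
        exact this⟩)
      (fun w w' h => Quot.sound (by
        obtain ⟨e, he, hor⟩ := h
        exact ⟨e, Finset.mem_union_left _ he, hor⟩)))
    (Quot.lift (fun w => Quot.mk (G₀.adj (A ∪ B)) ⟨w.1, by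
        have := (Finset.ext_iff.mp (verts_union G₀ A B) w.1).mpr
          (Finset.mem_union_right _ w.2)
        exact this⟩)
      (fun w w' h => Quot.sound (by
        obtain ⟨e, he, hor⟩ := h
        exact ⟨e, Finset.mem_union_right _ he, hor⟩)))

def compsEquivSplit (hd : ∀ v, v ∈ G₀.verts A → v ∈ G₀.verts B → False) :
    G₀.comps (A ∪ B) ≃ G₀.comps A ⊕ G₀.comps B where
  toFun := Quot.lift (splitFun A B) (splitFun_respects hd)
  invFun := splitInv A B
  left_inv := by
    intro q
    induction q using Quot.ind with
    | _ v =>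
      show splitInv A B (splitFun A B v) = _
      unfold splitFun
      by_cases hvA : v.1 ∈ G₀.verts A
      · rw [dif_pos hvA]
        exact congrArg _ (Subtype.ext rfl)
      · rw [dif_neg hvA]
        exact congrArg _ (Subtype.ext rfl)
  right_inv := by
    rintro (q | q)
    · induction q using Quot.ind with
      | _ w =>
        show splitFun A B _ = _
        unfold splitFun
        rw [dif_pos w.2]
    · induction q using Quot.ind with
      | _ w =>
        show splitFun A B _ = _
        unfold splitFun
        rw [dif_neg (fun hA => hd _ hA w.2)]

lemma trivComp_split (hd : ∀ v, v ∈ G₀.verts A → v ∈ G₀.verts B → False)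
    (x : G₀.comps (A ∪ B)) :
    G₀.TrivComp (A ∪ B) x ↔
      Sum.elim (G₀.TrivComp A) (G₀.TrivComp B) (compsEquivSplit hd x) := by
  induction x using Quot.ind with
  | _ v =>
    have hE : compsEquivSplit hd (Quot.mk _ v) = splitFun A B v := rfl
    rw [hE]
    unfold splitFun
    by_cases hvA : v.1 ∈ G₀.verts A
    · rw [dif_pos hvA]; erw [Sum.elim_inl]; rw [trivComp_mk, trivComp_mk, gainGroup_union_left hd hvA]
    · rw [dif_neg hvA]; erw [Sum.elim_inr]; rw [trivComp_mk, trivComp_mk]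
      have hvB : v.1 ∈ G₀.verts B := by
        have := (Finset.ext_iff.mp (verts_union G₀ A B) v.1).mp v.2
        rcases Finset.mem_union.mp this with h' | h'
        · exact absurd h' hvA
        · exact h'
      rw [gainGroup_union_right hd hvB]

lemma counts_split (hd : ∀ v, v ∈ G₀.verts A → v ∈ G₀.verts B → False) :
    G₀.c0 (A ∪ B) = G₀.c0 A + G₀.c0 B ∧ G₀.c1 (A ∪ B) = G₀.c1 A + G₀.c1 B := by
  constructor
  · have h0 : G₀.c0 (A ∪ B) = Nat.card {y : G₀.comps A ⊕ G₀.comps B //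
        Sum.elim (G₀.TrivComp A) (G₀.TrivComp B) y} :=
      nat_card_subtype_congr (compsEquivSplit hd) (trivComp_split hd)
    rw [h0, nat_card_subtype_sum]
    have e1 : Nat.card {a : G₀.comps A // Sum.elim (G₀.TrivComp A) (G₀.TrivComp B) (Sum.inl a)}
        = G₀.c0 A := nat_card_subtype_congr (Equiv.refl _) (fun a => by simp)
    have e2 : Nat.card {b : G₀.comps B // Sum.elim (G₀.TrivComp A) (G₀.TrivComp B) (Sum.inr b)}
        = G₀.c0 B := nat_card_subtype_congr (Equiv.refl _) (fun b => by simp)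
    rw [e1, e2]
  · have h1 : G₀.c1 (A ∪ B) = Nat.card {y : G₀.comps A ⊕ G₀.comps B //
        ¬ Sum.elim (G₀.TrivComp A) (G₀.TrivComp B) y} :=
      nat_card_subtype_congr (compsEquivSplit hd) (fun x => not_congr (trivComp_split hd x))
    rw [h1, nat_card_subtype_sum]
    have e1 : Nat.card {a : G₀.comps A // ¬ Sum.elim (G₀.TrivComp A) (G₀.TrivComp B) (Sum.inl a)}
        = G₀.c1 A := nat_card_subtype_congr (Equiv.refl _) (fun a => by simp)
    have e2 : Nat.card {b : G₀.comps B // ¬ Sum.elim (G₀.TrivComp A) (G₀.TrivComp B) (Sum.inr b)}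
        = G₀.c1 B := nat_card_subtype_congr (Equiv.refl _) (fun b => by simp)
    rw [e1, e2]

lemma verts_card_split (hd : ∀ v, v ∈ G₀.verts A → v ∈ G₀.verts B → False) :
    (G₀.verts (A ∪ B)).card = (G₀.verts A).card + (G₀.verts B).card := by
  rw [verts_union]
  exact Finset.card_union_of_disjoint (Finset.disjoint_left.mpr (fun v h1 h2 => hd v h1 h2))

end Split

end CGraph

namespace CGraph

section Final

open Relation

variable {G : CGraph (ℤ × ℤ)} {u : Fin G.n}

lemma loopsF_card : (loopsF G u).card = 3 := by
  have h01 : lIdx G u 0 ≠ lIdx G u 1 := fun h => by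
    have := lIdx_inj h; exact absurd this (by decide)
  have h02 : lIdx G u 0 ≠ lIdx G u 2 := fun h => by
    have := lIdx_inj h; exact absurd this (by decide)
  have h12 : lIdx G u 1 ≠ lIdx G u 2 := fun h => by
    have := lIdx_inj h; exact absurd this (by decide)
  rw [loopsF, Finset.card_insert_of_notMem (by simp [h01, h02]),
    Finset.card_insert_of_notMem (by simp [h12]), Finset.card_singleton]

lemma disjoint_map_loops (T : Finset (Fin G.m)) {L : Finset (Fin ((G.addThreeLoops u).m))}
    (hL : L ⊆ loopsF G u) : Disjoint (T.map (emb G u)) L := by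
  rw [Finset.disjoint_left]
  intro e he he'
  rw [Finset.mem_map] at he
  obtain ⟨e₀, _, rfl⟩ := he
  obtain ⟨i, hi⟩ := mem_loopsF (hL he')
  have h1 : ((emb G u) e₀ : ℕ) = e₀.1 := rfl
  have h2 : ((lIdx G u i : Fin ((G.addThreeLoops u).m)) : ℕ) = G.m + i.1 := rfl
  rw [hi] at h1
  have := e₀.2
  omega

lemma decompose (S : Finset (Fin ((G.addThreeLoops u).m))) :
    ∃ (T : Finset (Fin G.m)) (L : Finset (Fin ((G.addThreeLoops u).m))),
      L ⊆ loopsF G u ∧ S = T.map (emb G u) ∪ L ∧ S.card = T.card + L.card := by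
  classical
  set T := Finset.univ.filter (fun e => emb G u e ∈ S) with hTd
  set L : Finset (Fin ((G.addThreeLoops u).m)) := S.filter (fun e' => G.m ≤ (e' : ℕ)) with hLd
  have hLsub : L ⊆ loopsF G u := by
    intro e' he'
    rw [hLd, Finset.mem_filter] at he'
    have hm : (e' : ℕ) < G.m + 3 := e'.2
    have : (e' : ℕ) = G.m ∨ (e' : ℕ) = G.m + 1 ∨ (e' : ℕ) = G.m + 2 := by omega
    simp only [loopsF, Finset.mem_insert, Finset.mem_singleton]
    rcases this with h | h | h
    · exact Or.inl (Fin.ext (by simp [lIdx, h]))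
    · exact Or.inr (Or.inl (Fin.ext (by simp [lIdx, h])))
    · exact Or.inr (Or.inr (Fin.ext (by simp [lIdx, h])))
  have hSeq : S = T.map (emb G u) ∪ L := by
    ext e'
    rw [hTd, hLd]
    simp only [Finset.mem_union, Finset.mem_map, Finset.mem_filter, Finset.mem_univ, true_and]
    constructor
    · intro he'
      by_cases h : (e' : ℕ) < G.m
      · left
        refine ⟨⟨e'.1, h⟩, ?_, Fin.ext rfl⟩
        have heq : emb G u ⟨e'.1, h⟩ = e' := Fin.ext rfl
        rw [heq]
        exact he'
      · exact Or.inr ⟨he', by omega⟩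
    · rintro (⟨e₀, he₀, rfl⟩ | ⟨h, _⟩)
      · exact he₀
      · exact h
  refine ⟨T, L, hLsub, hSeq, ?_⟩
  rw [hSeq, Finset.card_union_of_disjoint (disjoint_map_loops T hLsub), Finset.card_map]

lemma ross_weak
    (h : ∀ S : Finset (Fin G.m), S.Nonempty →
      (S.card : ℤ) ≤ 2 * (G.verts S).card - 3 * (G.c0 S : ℤ) - 2 * (G.c1 S : ℤ))
    (T : Finset (Fin G.m)) :
    (T.card : ℤ) ≤ 2 * (G.verts T).card - 3 * (G.c0 T : ℤ) - 2 * (G.c1 T : ℤ) := by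
  rcases T.eq_empty_or_nonempty with rfl | hne
  · simp [G.verts_empty, G.c0_empty, G.c1_empty]
  · exact h T hne

lemma forward_ineq
    (hRoss : ∀ T : Finset (Fin G.m),
      (T.card : ℤ) ≤ 2 * (G.verts T).card - 3 * (G.c0 T : ℤ) - 2 * (G.c1 T : ℤ))
    (S : Finset (Fin ((G.addThreeLoops u).m))) (hS : S.Nonempty) :
    (S.card : ℤ) ≤ 2 * ((G.addThreeLoops u).verts S).card
      + max (2 * (zrank ((G.addThreeLoops u).Lambda S) : ℤ) - 1) 0
      - 3 * ((G.addThreeLoops u).c0 S : ℤ) - 2 * ((G.addThreeLoops u).c1 S : ℤ) := by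
  obtain ⟨T, L, hL, rfl, hcard⟩ := decompose S
  have hT := hRoss T
  have hcard' : ((T.map (emb G u) ∪ L).card : ℤ) = T.card + L.card := by exact_mod_cast hcard
  by_cases hLne : L.Nonempty
  · have hmax := loop_card_le_max (T := T) hL hLne
    by_cases huT : u ∈ G.verts T
    · have hvc : (((G.addThreeLoops u).verts (T.map (emb G u) ∪ L)).card : ℤ)
          = ((G.verts T).card : ℤ) := by
        exact_mod_cast congrArg Finset.card (Finset.ext (mem_verts_union_in hL huT))
      by_cases htriv : G.gainGroup T u = ⊥
      · obtain ⟨hc0, hc1⟩ := counts_in_triv hL huT hLne htriv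
        have hc0' : (G.c0 T : ℤ) = ((G.addThreeLoops u).c0 (T.map (emb G u) ∪ L) : ℤ) + 1 := by
          exact_mod_cast hc0
        have hc1' : (((G.addThreeLoops u).c1 (T.map (emb G u) ∪ L)) : ℤ) = (G.c1 T : ℤ) + 1 := by
          exact_mod_cast hc1
        linarith
      · obtain ⟨hc0, hc1⟩ := counts_in_nontriv hL huT hLne htriv
        have hc0' : ((G.addThreeLoops u).c0 (T.map (emb G u) ∪ L) : ℤ) = (G.c0 T : ℤ) := by
          exact_mod_cast hc0
        have hc1' : ((G.addThreeLoops u).c1 (T.map (emb G u) ∪ L) : ℤ) = (G.c1 T : ℤ) := by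
          exact_mod_cast hc1
        linarith
    · have hvc : (((G.addThreeLoops u).verts (T.map (emb G u) ∪ L)).card : ℤ)
          = ((G.verts T).card : ℤ) + 1 := by
        have h1 := congrArg Finset.card (verts_union_loops (T := T) hL hLne)
        have h2 : (G.verts T ∪ {u}).card = (G.verts T).card + 1 := by
          rw [Finset.card_union_of_disjoint (by simp [huT]), Finset.card_singleton]
        replace h1 := h1.trans h2
        exact_mod_cast h1
      obtain ⟨hc0, hc1⟩ := counts_out hL hLne huT
      have hc0' : ((G.addThreeLoops u).c0 (T.map (emb G u) ∪ L) : ℤ) = (G.c0 T : ℤ) := by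
        exact_mod_cast hc0
      have hc1' : ((G.addThreeLoops u).c1 (T.map (emb G u) ∪ L) : ℤ) = (G.c1 T : ℤ) + 1 := by
        exact_mod_cast hc1
      linarith
  · rw [Finset.not_nonempty_iff_eq_empty] at hLne
    subst hLne
    rw [Finset.union_empty] at *
    have hvc : (((G.addThreeLoops u).verts (T.map (emb G u))).card : ℤ)
        = ((G.verts T).card : ℤ) := by
      exact_mod_cast congrArg Finset.card (verts_map (u := u) T)
    have hc0' : ((G.addThreeLoops u).c0 (T.map (emb G u)) : ℤ) = (G.c0 T : ℤ) := by
      exact_mod_cast c0_map (u := u) T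
    have hc1' : ((G.addThreeLoops u).c1 (T.map (emb G u)) : ℤ) = (G.c1 T : ℤ) := by
      exact_mod_cast c1_map (u := u) T
    have hmax : (0 : ℤ) ≤ max (2 * (zrank ((G.addThreeLoops u).Lambda (T.map (emb G u))) : ℤ) - 1) 0 :=
      le_max_right _ _
    simp only [Finset.card_empty, Nat.cast_zero, add_zero] at hcard'
    linarith

lemma backward_ineq (hLam : (G.addThreeLoops u).ColoredLamanSparse)
    (S₀ : Finset (Fin G.m)) :
    (S₀.card : ℤ) ≤ 2 * (G.verts S₀).card - 3 * (G.c0 S₀ : ℤ) - 2 * (G.c1 S₀ : ℤ) := by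
  classical
  have hmaxle : ∀ S : Finset (Fin ((G.addThreeLoops u).m)),
      max (2 * (zrank ((G.addThreeLoops u).Lambda S) : ℤ) - 1) 0 ≤ 3 := by
    intro S
    have := zrank_le_two ((G.addThreeLoops u).Lambda S)
    have h2 : ((zrank ((G.addThreeLoops u).Lambda S)) : ℤ) ≤ 2 := by exact_mod_cast this
    apply max_le <;> linarith
  set A := S₀.filter (fun e => G.gainGroup S₀ (G.tail e) = ⊥) with hAdef
  set B := S₀.filter (fun e => ¬ G.gainGroup S₀ (G.tail e) = ⊥) with hBdef
  have hAsub : A ⊆ S₀ := Finset.filter_subset _ _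
  have hBsub : B ⊆ S₀ := Finset.filter_subset _ _
  have hunion : A ∪ B = S₀ := Finset.filter_union_filter_not_eq _ _
  have edge_reach : ∀ e ∈ S₀, G.Reach S₀ (G.tail e) (G.head e) := by
    intro e he
    exact reach_of_liftStep (a := (0 : ℤ × ℤ)) ⟨e, he, Or.inl ⟨rfl, rfl, rfl⟩⟩
  have hvA : ∀ v ∈ G.verts A, G.gainGroup S₀ v = ⊥ := by
    intro v hv
    simp only [verts, Finset.mem_union, Finset.mem_image] at hv
    rcases hv with ⟨e, he, rfl⟩ | ⟨e, he, rfl⟩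
    · exact (Finset.mem_filter.mp he).2
    · rw [← gainGroup_eq_of_reach (edge_reach e (hAsub he))]
      exact (Finset.mem_filter.mp he).2
  have hvB : ∀ v ∈ G.verts B, G.gainGroup S₀ v ≠ ⊥ := by
    intro v hv
    simp only [verts, Finset.mem_union, Finset.mem_image] at hv
    rcases hv with ⟨e, he, rfl⟩ | ⟨e, he, rfl⟩
    · exact (Finset.mem_filter.mp he).2
    · rw [← gainGroup_eq_of_reach (edge_reach e (hBsub he))]
      exact (Finset.mem_filter.mp he).2
  have hd : ∀ v, v ∈ G.verts A → v ∈ G.verts B → False :=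
    fun v h1 h2 => hvB v h2 (hvA v h1)
  -- the A-side bound
  have hA_bound : (A.card : ℤ) ≤ 2 * (G.verts A).card - 3 * (G.c0 A : ℤ) - 2 * (G.c1 A : ℤ) := by
    rcases A.eq_empty_or_nonempty with hAe | hAne
    · rw [hAe]; simp [G.verts_empty, G.c0_empty, G.c1_empty]
    · have hne : (A.map (emb G u)).Nonempty := hAne.map
      have hthis := hLam (A.map (emb G u)) hne
      have hLamA : (G.addThreeLoops u).Lambda (A.map (emb G u)) = ⊥ := by
        apply Lambda_eq_bot
        intro v hv
        rw [gainGroup_map (u := u) A v]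
        have hvT : v ∈ G.verts A := (Finset.ext_iff.mp (verts_map (u := u) A) v).mp hv
        exact le_bot_iff.mp ((gainGroup_mono hAsub v).trans_eq (hvA v hvT))
      rw [hLamA, zrank_bot] at hthis
      have hmax0 : max (2 * ((0 : ℕ) : ℤ) - 1) 0 = 0 := by norm_num
      rw [hmax0] at hthis
      have hvc : (((G.addThreeLoops u).verts (A.map (emb G u))).card : ℤ)
          = ((G.verts A).card : ℤ) := by
        exact_mod_cast congrArg Finset.card (verts_map (u := u) A)
      have hc0' : ((G.addThreeLoops u).c0 (A.map (emb G u)) : ℤ) = (G.c0 A : ℤ) := by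
        exact_mod_cast c0_map (u := u) A
      have hc1' : ((G.addThreeLoops u).c1 (A.map (emb G u)) : ℤ) = (G.c1 A : ℤ) := by
        exact_mod_cast c1_map (u := u) A
      have hcm : ((A.map (emb G u)).card : ℤ) = (A.card : ℤ) := by
        exact_mod_cast Finset.card_map _
      linarith
  -- the B-side bound
  have hB_bound : (B.card : ℤ) ≤ 2 * (G.verts B).card - 3 * (G.c0 B : ℤ) - 2 * (G.c1 B : ℤ) := by
    rcases B.eq_empty_or_nonempty with hBe | hBne
    · rw [hBe]; simp [G.verts_empty, G.c0_empty, G.c1_empty]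
    · have hloopsne : (loopsF G u).Nonempty := ⟨lIdx G u 0, by simp [loopsF]⟩
      have hne : (B.map (emb G u) ∪ loopsF G u).Nonempty :=
        Finset.Nonempty.inr hloopsne
      have hthis := hLam (B.map (emb G u) ∪ loopsF G u) hne
      have hmB := hmaxle (B.map (emb G u) ∪ loopsF G u)
      have hcardU : ((B.map (emb G u) ∪ loopsF G u).card : ℤ) = (B.card : ℤ) + 3 := by
        rw [Finset.card_union_of_disjoint (disjoint_map_loops B (Finset.Subset.refl _)),
          Finset.card_map, loopsF_card]
        push_cast
        ring
      rw [hcardU] at hthis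
      by_cases huB : u ∈ G.verts B
      · have hnt : G.gainGroup B u ≠ ⊥ := by
          have h1 : G.gainGroup (A ∪ B) u = G.gainGroup B u := gainGroup_union_right hd huB
          rw [hunion] at h1
          rw [← h1]
          exact hvB u huB
        obtain ⟨hc0, hc1⟩ := counts_in_nontriv (Finset.Subset.refl _) huB hloopsne hnt
        have hvc : (((G.addThreeLoops u).verts (B.map (emb G u) ∪ loopsF G u)).card : ℤ)
            = ((G.verts B).card : ℤ) := by
          exact_mod_cast congrArg Finset.card
            (Finset.ext (mem_verts_union_in (Finset.Subset.refl _) huB))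
        have hc0' : ((G.addThreeLoops u).c0 (B.map (emb G u) ∪ loopsF G u) : ℤ)
            = (G.c0 B : ℤ) := by exact_mod_cast hc0
        have hc1' : ((G.addThreeLoops u).c1 (B.map (emb G u) ∪ loopsF G u) : ℤ)
            = (G.c1 B : ℤ) := by exact_mod_cast hc1
        linarith
      · obtain ⟨hc0, hc1⟩ := counts_out (Finset.Subset.refl _) hloopsne huB
        have hvc : (((G.addThreeLoops u).verts (B.map (emb G u) ∪ loopsF G u)).card : ℤ)
            = ((G.verts B).card : ℤ) + 1 := by
          have h1 := congrArg Finset.card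
            (verts_union_loops (T := B) (Finset.Subset.refl _) hloopsne)
          have h2 : (G.verts B ∪ {u}).card = (G.verts B).card + 1 := by
            rw [Finset.card_union_of_disjoint (by simp [huB]), Finset.card_singleton]
          replace h1 := h1.trans h2
          exact_mod_cast h1
        have hc0' : ((G.addThreeLoops u).c0 (B.map (emb G u) ∪ loopsF G u) : ℤ)
            = (G.c0 B : ℤ) := by exact_mod_cast hc0
        have hc1' : ((G.addThreeLoops u).c1 (B.map (emb G u) ∪ loopsF G u) : ℤ)
            = (G.c1 B : ℤ) + 1 := by exact_mod_cast hc1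
        linarith
  -- combine
  obtain ⟨hs0, hs1⟩ := counts_split hd
  have hvc := verts_card_split hd
  have hcardS : (A ∪ B).card = A.card + B.card :=
    Finset.card_union_of_disjoint (Finset.disjoint_filter_filter_not _ _ _)
  rw [← hunion]
  have h1 : ((A ∪ B).card : ℤ) = (A.card : ℤ) + (B.card : ℤ) := by exact_mod_cast hcardS
  have h2 : ((G.verts (A ∪ B)).card : ℤ) = ((G.verts A).card : ℤ) + ((G.verts B).card : ℤ) := by
    exact_mod_cast hvc
  have h3 : (G.c0 (A ∪ B) : ℤ) = (G.c0 A : ℤ) + (G.c0 B : ℤ) := by exact_mod_cast hs0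
  have h4 : (G.c1 (A ∪ B) : ℤ) = (G.c1 A : ℤ) + (G.c1 B : ℤ) := by exact_mod_cast hs1
  linarith

end Final

end CGraph

end Aux
/-- A `ℤ²`-colored graph is a Ross graph iff, for any vertex `u`,
adding three self-loops at `u` colored `(1,0)`, `(0,1)` and `(1,1)` yields a
colored-Laman graph. -/
theorem ross_iff_addLoops_coloredLaman (G : CGraph (ℤ × ℤ)) (u : Fin G.n) :
    G.Ross ↔ (G.addThreeLoops u).ColoredLaman := by
  constructor
  · rintro ⟨hm, hsp⟩
    constructor
    · intro S hS
      exact CGraph.forward_ineq (CGraph.ross_weak hsp) S hS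
    · show (((G.m + 3 : ℕ)) : ℤ) = 2 * (G.n : ℤ) + 1
      push_cast
      omega
  · rintro ⟨hsp, hm⟩
    constructor
    · have h3 : ((G.m + 3 : ℕ) : ℤ) = 2 * (G.n : ℤ) + 1 := hm
      push_cast at h3
      omega
    · intro S hS
      exact CGraph.backward_ineq hsp S
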